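/- For N ≥ 1, the probability (N−1)!/N^N · Σ_{n=0}^{N−1} N^n/n! is asymptotic to √(π/(2N)) as N → ∞. -/

import Mathlib

open Real Filter Finset

noncomputable def Sfun (N : ℕ) : ℝ :=
  ∑ k ∈ Finset.range N, ∏ j ∈ Finset.range k, (1 - ((j : ℝ) + 1) / N)

lemma prod_eq_desc (N k : ℕ) (hk : k ≤ N - 1) (hN : 1 ≤ N) :
    ∏ j ∈ Finset.range k, (1 - ((j : ℝ) + 1) / N)
      = ((N - 1).descFactorial k : ℝ) / (N : ℝ) ^ k := by
  have hN0 : (N : ℝ) ≠ 0 := by positivity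
  have h1 : ∀ j ∈ Finset.range k, (1 - ((j : ℝ) + 1) / N) = ((N - 1 - j : ℕ) : ℝ) / N := by
    intro j hj
    have hj' : j + 1 ≤ N := by have := Finset.mem_range.mp hj; omega
    rw [Nat.cast_sub (by omega : j ≤ N - 1), Nat.cast_sub (by omega : 1 ≤ N)]
    push_cast
    field_simp
    ring
  rw [Finset.prod_congr rfl h1, Finset.prod_div_distrib, Finset.prod_const,
    Nat.descFactorial_eq_prod_range, Nat.cast_prod, Finset.card_range]

lemma key_id (N : ℕ) (hN : 1 ≤ N) :
    (Nat.factorial (N - 1) : ℝ) / (N : ℝ) ^ N *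
        ∑ n ∈ Finset.range N, (N : ℝ) ^ n / (Nat.factorial n)
      = Sfun N / N := by
  have hN0 : (N : ℝ) ≠ 0 := by positivity
  rw [Finset.mul_sum, ← Finset.sum_range_reflect (fun n => (Nat.factorial (N-1) : ℝ) / (N:ℝ)^N * ((N:ℝ)^n / (Nat.factorial n))) N]
  unfold Sfun
  rw [Finset.sum_div]
  apply Finset.sum_congr rfl
  intro k hk
  have hkN : k ≤ N - 1 := by have := Finset.mem_range.mp hk; omega
  rw [prod_eq_desc N k hkN hN]
  have hfac : ((N - 1 - k).factorial : ℝ) * ((N-1).descFactorial k : ℝ) = ((N-1).factorial : ℝ) := by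
    rw [← Nat.cast_mul, Nat.factorial_mul_descFactorial hkN]
  have hpow : (N : ℝ) ^ N = (N:ℝ) ^ (N - 1 - k) * (N:ℝ) ^ (k + 1) := by
    rw [← pow_add]
    congr 1
    omega
  have hf0 : ((N - 1 - k).factorial : ℝ) ≠ 0 := by positivity
  rw [hpow]
  field_simp
  rw [← hfac]
  ring

lemma gauss_sum (k : ℕ) : ∑ j ∈ Finset.range k, ((j : ℝ) + 1) = k * (k + 1) / 2 := by
  induction k with
  | zero => simp
  | succ n ih => rw [Finset.sum_range_succ, ih]; push_cast; ring

lemma sq_sum_le (k : ℕ) : ∑ j ∈ Finset.range k, ((j : ℝ) + 1) ^ 2 ≤ (k : ℝ) ^ 3 := by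
  calc ∑ j ∈ Finset.range k, ((j : ℝ) + 1) ^ 2
      ≤ ∑ _j ∈ Finset.range k, (k : ℝ) ^ 2 := by
        apply Finset.sum_le_sum
        intro j hj
        have : (j : ℝ) + 1 ≤ k := by
          have := Finset.mem_range.mp hj
          exact_mod_cast Nat.succ_le_of_lt this
        have h0 : (0:ℝ) ≤ (j:ℝ) + 1 := by positivity
        nlinarith
    _ = (k : ℝ) ^ 3 := by rw [Finset.sum_const, Finset.card_range]; ring

lemma one_sub_ge (x : ℝ) (h0 : 0 ≤ x) (h2 : x ≤ 1/2) :
    Real.exp (-(x + 2 * x ^ 2)) ≤ 1 - x := by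
  have hx1 : 0 < 1 - x := by linarith
  have h1 : 1 / (1 - x) ≤ Real.exp (x / (1 - x)) := by
    have := Real.add_one_le_exp (x / (1 - x))
    have : x / (1 - x) + 1 = 1 / (1 - x) := by field_simp; ring
    linarith [Real.add_one_le_exp (x / (1 - x)), this]
  have h2' : x / (1 - x) ≤ x + 2 * x ^ 2 := by
    rw [div_le_iff₀ hx1]
    nlinarith
  have h3 : 1 / (1 - x) ≤ Real.exp (x + 2 * x ^ 2) :=
    h1.trans (Real.exp_le_exp.mpr h2')
  rw [Real.exp_neg, inv_le_comm₀ (Real.exp_pos _) hx1, ← one_div]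
  exact h3

lemma term_nonneg (N k : ℕ) (hk : k ≤ N) :
    0 ≤ ∏ j ∈ Finset.range k, (1 - ((j : ℝ) + 1) / N) := by
  rcases Nat.eq_zero_or_pos N with h | hposN
  · subst h
    have : k = 0 := Nat.le_zero.mp hk
    subst this; norm_num
  apply Finset.prod_nonneg
  intro j hj
  have hj' : j + 1 ≤ N := by have := Finset.mem_range.mp hj; omega
  have hN0 : (0:ℝ) < N := by positivity
  have : ((j:ℝ) + 1) / N ≤ 1 := by
    rw [div_le_one hN0]; exact_mod_cast hj'
  linarith

lemma term_upper (N k : ℕ) (hk : k ≤ N) :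
    ∏ j ∈ Finset.range k, (1 - ((j : ℝ) + 1) / N)
      ≤ Real.exp (-(k : ℝ) ^ 2 / (2 * N)) := by
  rcases Nat.eq_zero_or_pos N with h | hN
  · subst h
    have : k = 0 := Nat.le_zero.mp hk
    subst this; norm_num
  have hN0 : (0:ℝ) < N := by positivity
  calc ∏ j ∈ Finset.range k, (1 - ((j : ℝ) + 1) / N)
      ≤ ∏ j ∈ Finset.range k, Real.exp (-(((j:ℝ) + 1) / N)) := by
        apply Finset.prod_le_prod
        · intro j hj
          have hj' : j + 1 ≤ N := by have := Finset.mem_range.mp hj; omega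
          have : ((j:ℝ) + 1) / N ≤ 1 := by rw [div_le_one hN0]; exact_mod_cast hj'
          linarith
        · intro j _
          have := Real.add_one_le_exp (-(((j:ℝ) + 1) / N))
          linarith
    _ = Real.exp (∑ j ∈ Finset.range k, -(((j:ℝ) + 1) / N)) := by rw [Real.exp_sum]
    _ ≤ Real.exp (-(k : ℝ) ^ 2 / (2 * N)) := by
        apply Real.exp_le_exp.mpr
        rw [Finset.sum_neg_distrib, ← Finset.sum_div, gauss_sum, neg_div, neg_le_neg_iff,
          div_le_div_iff₀ (by positivity) hN0]
        nlinarith [Nat.cast_nonneg (α := ℝ) k]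

lemma term_lower (N k m : ℕ) (hk : k ≤ m) (hm : 2 * m ≤ N) (hN : 1 ≤ N) :
    Real.exp (-(2 * (m : ℝ) ^ 3 / (N : ℝ) ^ 2)) * Real.exp (-((k : ℝ) + 1) ^ 2 / (2 * N))
      ≤ ∏ j ∈ Finset.range k, (1 - ((j : ℝ) + 1) / N) := by
  have hN0 : (0:ℝ) < N := by positivity
  have hstep : ∀ j ∈ Finset.range k,
      Real.exp (-((((j:ℝ)+1)/N) + 2 * (((j:ℝ)+1)/N) ^ 2)) ≤ 1 - ((j:ℝ)+1)/N := by
    intro j hj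
    apply one_sub_ge
    · positivity
    · rw [div_le_iff₀ hN0]
      have hj' : 2 * (j + 1) ≤ N := by have := Finset.mem_range.mp hj; omega
      have : (2:ℝ) * ((j:ℝ) + 1) ≤ N := by exact_mod_cast hj'
      linarith
  calc Real.exp (-(2 * (m : ℝ) ^ 3 / (N : ℝ) ^ 2)) * Real.exp (-((k : ℝ) + 1) ^ 2 / (2 * N))
      = Real.exp (-(((k : ℝ) + 1) ^ 2 / (2 * N) + 2 * (m : ℝ) ^ 3 / (N : ℝ) ^ 2)) := by
        rw [← Real.exp_add]; ring_nf
    _ ≤ Real.exp (∑ j ∈ Finset.range k, -((((j:ℝ)+1)/N) + 2 * (((j:ℝ)+1)/N) ^ 2)) := by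
        apply Real.exp_le_exp.mpr
        rw [Finset.sum_neg_distrib, neg_le_neg_iff]
        have e1 : ∑ j ∈ Finset.range k, ((((j:ℝ)+1)/N) + 2 * (((j:ℝ)+1)/N) ^ 2)
            = (∑ j ∈ Finset.range k, ((j:ℝ)+1)) / N
              + 2 * (∑ j ∈ Finset.range k, ((j:ℝ)+1)^2) / N ^ 2 := by
          rw [Finset.sum_add_distrib, ← Finset.sum_div]
          congr 1
          rw [Finset.mul_sum, Finset.sum_div]
          apply Finset.sum_congr rfl
          intro j _
          field_simp
        rw [e1, gauss_sum]
        have h2 : 2 * (∑ j ∈ Finset.range k, ((j:ℝ)+1)^2) / N ^ 2 ≤ 2 * (m:ℝ)^3 / N^2 := by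
          apply div_le_div_of_nonneg_right ?_ (by positivity) |>.trans_eq rfl
          have h3 := sq_sum_le k
          have hkm : (k:ℝ) ≤ m := by exact_mod_cast hk
          have hk0 : (0:ℝ) ≤ k := Nat.cast_nonneg k
          have := pow_le_pow_left₀ hk0 hkm 3
          linarith
        have h1 : (k:ℝ) * ((k:ℝ)+1) / 2 / N ≤ ((k:ℝ)+1)^2 / (2*N) := by
          rw [div_div, div_le_div_iff₀ (by positivity) (by positivity)]
          nlinarith [Nat.cast_nonneg (α := ℝ) k]
        linarith
    _ = ∏ j ∈ Finset.range k, Real.exp (-((((j:ℝ)+1)/N) + 2 * (((j:ℝ)+1)/N) ^ 2)) := by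
        rw [Real.exp_sum]
    _ ≤ ∏ j ∈ Finset.range k, (1 - ((j:ℝ)+1)/N) := by
        apply Finset.prod_le_prod
        · intro j _; positivity
        · exact hstep

lemma f_antitoneOn (N : ℕ) (s : Set ℝ) (hs : s ⊆ Set.Ici 0) :
    AntitoneOn (fun x : ℝ => Real.exp (-(1/(2*(N:ℝ))) * x ^ 2)) s := by
  intro x hx y hy hxy
  have hx0 : 0 ≤ x := hs hx
  apply Real.exp_le_exp.mpr
  have hb : 0 ≤ 1/(2*(N:ℝ)) := by positivity
  have h2 : x ^ 2 ≤ y ^ 2 := pow_le_pow_left₀ hx0 hxy 2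
  nlinarith [mul_le_mul_of_nonneg_left h2 hb]

lemma upper_bound (N : ℕ) (hN : 1 ≤ N) :
    Sfun N ≤ 1 + Real.sqrt (π / 2) * Real.sqrt N := by
  have hN0 : (0:ℝ) < N := by positivity
  set f : ℝ → ℝ := fun x => Real.exp (-(1/(2*(N:ℝ))) * x ^ 2) with hf
  have hub : Sfun N ≤ ∑ k ∈ Finset.range N, f (k : ℝ) := by
    apply Finset.sum_le_sum
    intro k hk
    have h := term_upper N k (le_of_lt (Finset.mem_range.mp hk))
    refine h.trans_eq ?_
    simp only [hf]
    ring_nf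
  have hsplit : ∑ k ∈ Finset.range N, f (k : ℝ)
      = (∑ i ∈ Finset.range (N-1), f (0 + ((i:ℕ) + 1 : ℕ))) + f 0 := by
    rw [show N = (N-1) + 1 by omega, Finset.sum_range_succ']
    congr 1
    · apply Finset.sum_congr rfl; intro i _; norm_num
    · norm_num
  have hint : (∑ i ∈ Finset.range (N-1), f (0 + ((i:ℕ) + 1 : ℕ)))
      ≤ ∫ x in (0:ℝ)..(0 + ((N-1 : ℕ):ℝ)), f x := by
    apply AntitoneOn.sum_le_integral
    apply f_antitoneOn
    intro x hx
    exact hx.1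
  have hIoi : MeasureTheory.IntegrableOn f (Set.Ioi 0) := by
    apply (integrable_exp_neg_mul_sq (by positivity : (0:ℝ) < 1/(2*(N:ℝ)))).integrableOn
  have hmono : (∫ x in (0:ℝ)..((N-1 : ℕ):ℝ), f x) ≤ ∫ x in Set.Ioi (0:ℝ), f x := by
    rw [intervalIntegral.integral_of_le (by positivity)]
    apply MeasureTheory.setIntegral_mono_set hIoi
    · filter_upwards with x using Real.exp_nonneg _
    · apply HasSubset.Subset.eventuallyLE
      exact Set.Ioc_subset_Ioi_self
  have heval : (∫ x in Set.Ioi (0:ℝ), f x) = Real.sqrt (π / 2) * Real.sqrt N := by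
    rw [hf, integral_gaussian_Ioi,
      show π / (1/(2*(N:ℝ))) = (π/2 * N) * 2 ^ 2 by field_simp,
      Real.sqrt_mul (by positivity) (2^2), Real.sqrt_sq (by norm_num : (0:ℝ) ≤ 2),
      Real.sqrt_mul (by positivity : (0:ℝ) ≤ π/2)]
    ring
  have hf0 : f 0 = 1 := by simp [hf]
  rw [show (0:ℝ) + ((N-1 : ℕ):ℝ) = ((N-1:ℕ):ℝ) by ring] at hint
  linarith

lemma lower_bound (A N : ℕ) (hN : 1 ≤ N) (hm : 2 * (A * ⌈Real.sqrt N⌉₊) ≤ N) :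
    Real.exp (-(2 * ((A * ⌈Real.sqrt N⌉₊ : ℕ) : ℝ) ^ 3 / (N : ℝ) ^ 2)) *
        (Real.sqrt N * (∫ u in (0:ℝ)..(A:ℝ), Real.exp (-(1/2) * u ^ 2)) - 1)
      ≤ Sfun N := by
  have hN0 : (0:ℝ) < N := by positivity
  have hsN : 0 < Real.sqrt N := Real.sqrt_pos.mpr hN0
  set m : ℕ := A * ⌈Real.sqrt N⌉₊ with hmdef
  set f : ℝ → ℝ := fun x => Real.exp (-(1/(2*(N:ℝ))) * x ^ 2) with hf
  set δ : ℝ := 2 * (m : ℝ) ^ 3 / (N : ℝ) ^ 2 with hδ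
  have hfc : Continuous f := by fun_prop
  have hfnn : ∀ x : ℝ, 0 ≤ f x := fun x => Real.exp_nonneg _
  -- step 1 : restrict sum
  have h1 : ∑ k ∈ Finset.range m, ∏ j ∈ Finset.range k, (1 - ((j : ℝ) + 1) / N) ≤ Sfun N := by
    apply Finset.sum_le_sum_of_subset_of_nonneg
    · apply Finset.range_subset_range.mpr; omega
    · intro k hk _
      exact term_nonneg N k (le_of_lt (Finset.mem_range.mp hk))
  -- step 2 : term lower bounds
  have h2 : ∑ k ∈ Finset.range m, Real.exp (-δ) * f ((k:ℝ) + 1)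
      ≤ ∑ k ∈ Finset.range m, ∏ j ∈ Finset.range k, (1 - ((j : ℝ) + 1) / N) := by
    apply Finset.sum_le_sum
    intro k hk
    have h := term_lower N k m (le_of_lt (Finset.mem_range.mp hk)) hm hN
    refine le_trans (le_of_eq ?_) h
    simp only [hf, hδ]
    rw [← Real.exp_add, ← Real.exp_add]
    ring_nf
  -- step 3 : sum vs integral
  have h3 : (∫ x in (0:ℝ)..((m:ℕ):ℝ), f x) - 1 ≤ ∑ k ∈ Finset.range m, f ((k:ℝ) + 1) := by
    have hIS : (∫ x in (0:ℝ)..(0 + ((m:ℕ):ℝ)), f x) ≤ ∑ i ∈ Finset.range m, f (0 + (i:ℝ)) := by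
      apply AntitoneOn.integral_le_sum
      apply f_antitoneOn
      intro x hx; exact hx.1
    have hid : ∑ i ∈ Finset.range m, f (i:ℝ) + f (m:ℝ)
        = f 0 + ∑ k ∈ Finset.range m, f ((k:ℝ) + 1) := by
      have e1 := Finset.sum_range_succ (fun i : ℕ => f (i:ℝ)) m
      have e2 := Finset.sum_range_succ' (fun i : ℕ => f (i:ℝ)) m
      rw [← e1, e2]
      push_cast
      ring
    have hf0 : f 0 = 1 := by simp [hf]
    have hfm : 0 ≤ f (m:ℝ) := hfnn _
    rw [show (0:ℝ) + ((m:ℕ):ℝ) = ((m:ℕ):ℝ) by ring] at hIS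
    simp only [zero_add] at hIS
    linarith
  -- step 4 : integral over [0, A√N] vs [0, m]
  have hAm : (A:ℝ) * Real.sqrt N ≤ (m:ℝ) := by
    rw [hmdef]
    push_cast
    have := Nat.le_ceil (Real.sqrt N)
    exact mul_le_mul_of_nonneg_left this (Nat.cast_nonneg A)
  have h4 : (∫ x in (0:ℝ)..((A:ℝ) * Real.sqrt N), f x) ≤ ∫ x in (0:ℝ)..((m:ℕ):ℝ), f x := by
    have i1 : IntervalIntegrable f MeasureTheory.volume 0 ((A:ℝ) * Real.sqrt N) :=
      hfc.intervalIntegrable _ _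
    have i2 : IntervalIntegrable f MeasureTheory.volume ((A:ℝ) * Real.sqrt N) ((m:ℕ):ℝ) :=
      hfc.intervalIntegrable _ _
    rw [← intervalIntegral.integral_add_adjacent_intervals i1 i2]
    have : 0 ≤ ∫ x in ((A:ℝ) * Real.sqrt N)..((m:ℕ):ℝ), f x := by
      apply intervalIntegral.integral_nonneg hAm
      intro x _; exact hfnn x
    linarith
  -- step 5 : change of variables
  have h5 : (∫ x in (0:ℝ)..((A:ℝ) * Real.sqrt N), f x)
      = Real.sqrt N * ∫ u in (0:ℝ)..(A:ℝ), Real.exp (-(1/2) * u ^ 2) := by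
    have hc : Real.sqrt N ≠ 0 := ne_of_gt hsN
    have := intervalIntegral.integral_comp_mul_right f (a := 0) (b := (A:ℝ)) hc
    rw [zero_mul] at this
    have harg : ∀ u : ℝ, f (u * Real.sqrt N) = Real.exp (-(1/2) * u ^ 2) := by
      intro u
      simp only [hf]
      congr 1
      have : Real.sqrt N ^ 2 = (N:ℝ) := Real.sq_sqrt (le_of_lt hN0)
      field_simp
      nlinarith [this]
    simp only [harg] at this
    rw [this, smul_eq_mul]
    field_simp
  -- assemble
  have hcA : 0 ≤ ∫ u in (0:ℝ)..(A:ℝ), Real.exp (-(1/2) * u ^ 2) := by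
    apply intervalIntegral.integral_nonneg (Nat.cast_nonneg A)
    intro x _; exact Real.exp_nonneg _
  have hexp : (0:ℝ) ≤ Real.exp (-δ) := Real.exp_nonneg _
  have hsum : Real.exp (-δ) * ((∫ x in (0:ℝ)..((m:ℕ):ℝ), f x) - 1)
      ≤ ∑ k ∈ Finset.range m, Real.exp (-δ) * f ((k:ℝ) + 1) := by
    rw [← Finset.mul_sum]
    exact mul_le_mul_of_nonneg_left h3 hexp
  have hstep : Real.sqrt N * (∫ u in (0:ℝ)..(A:ℝ), Real.exp (-(1/2) * u ^ 2)) - 1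
      ≤ (∫ x in (0:ℝ)..((m:ℕ):ℝ), f x) - 1 := by
    rw [← h5]
    linarith
  calc Real.exp (-δ) * (Real.sqrt N * (∫ u in (0:ℝ)..(A:ℝ), Real.exp (-(1/2) * u ^ 2)) - 1)
      ≤ Real.exp (-δ) * ((∫ x in (0:ℝ)..((m:ℕ):ℝ), f x) - 1) :=
        mul_le_mul_of_nonneg_left hstep hexp
    _ ≤ ∑ k ∈ Finset.range m, Real.exp (-δ) * f ((k:ℝ) + 1) := hsum
    _ ≤ ∑ k ∈ Finset.range m, ∏ j ∈ Finset.range k, (1 - ((j : ℝ) + 1) / N) := h2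
    _ ≤ Sfun N := h1

lemma sqrt_tendsto : Tendsto (fun N : ℕ => Real.sqrt N) atTop atTop := by
  apply tendsto_atTop_atTop.mpr
  intro b
  refine ⟨⌈b^2⌉₊, fun N hN => ?_⟩
  have h1 : b ^ 2 ≤ (N : ℝ) := le_trans (Nat.le_ceil _) (by exact_mod_cast hN)
  calc b ≤ |b| := le_abs_self b
    _ = Real.sqrt (b^2) := (Real.sqrt_sq_eq_abs b).symm
    _ ≤ Real.sqrt N := Real.sqrt_le_sqrt h1

lemma inv_sqrt_tendsto : Tendsto (fun N : ℕ => 1 / Real.sqrt N) atTop (nhds 0) := by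
  simpa [one_div, Pi.inv_def] using sqrt_tendsto.inv_tendsto_atTop

lemma delta_tendsto (A : ℕ) :
    Tendsto (fun N : ℕ => 2 * ((A * ⌈Real.sqrt N⌉₊ : ℕ) : ℝ) ^ 3 / (N : ℝ) ^ 2)
      atTop (nhds 0) := by
  apply squeeze_zero (g := fun N : ℕ => 16 * (A:ℝ)^3 * (1 / Real.sqrt N))
  · intro N; positivity
  · intro N
    rcases Nat.eq_zero_or_pos N with h | hN
    · subst h; simp
    have hN0 : (0:ℝ) < N := by positivity
    set t := Real.sqrt N with ht
    have ht1 : 1 ≤ t := Real.one_le_sqrt.mpr (by exact_mod_cast hN)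
    have ht0 : 0 < t := by linarith
    have hNt : (N:ℝ) = t ^ 2 := (Real.sq_sqrt (le_of_lt hN0)).symm
    have hceil : ((⌈t⌉₊ : ℕ) : ℝ) ≤ 2 * t := by
      have h1 : (⌈t⌉₊ : ℝ) < t + 1 := Nat.ceil_lt_add_one (by linarith)
      linarith
    have hmle : ((A * ⌈t⌉₊ : ℕ) : ℝ) ≤ 2 * A * t := by
      push_cast
      calc (A:ℝ) * (⌈t⌉₊:ℝ) ≤ (A:ℝ) * (2*t) :=
            mul_le_mul_of_nonneg_left hceil (Nat.cast_nonneg A)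
        _ = 2 * A * t := by ring
    have hm0 : (0:ℝ) ≤ ((A * ⌈t⌉₊ : ℕ) : ℝ) := Nat.cast_nonneg _
    have hcube : ((A * ⌈t⌉₊ : ℕ) : ℝ) ^ 3 ≤ (2 * A * t) ^ 3 := pow_le_pow_left₀ hm0 hmle 3
    rw [hNt, div_le_iff₀ (by positivity)]
    have expand : 16 * (A:ℝ)^3 * (1 / t) * (t^2)^2 = 2 * ((2*A*t)^3) := by
      field_simp
      ring
    rw [expand]
    linarith
  · have := inv_sqrt_tendsto.const_mul (16 * (A:ℝ)^3)
    simpa using this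

lemma cA_tendsto :
    Tendsto (fun A : ℕ => ∫ u in (0:ℝ)..(A:ℝ), Real.exp (-(1/2) * u ^ 2))
      atTop (nhds (Real.sqrt (π / 2))) := by
  have hint : MeasureTheory.IntegrableOn (fun u : ℝ => Real.exp (-(1/2) * u ^ 2)) (Set.Ioi 0) :=
    (integrable_exp_neg_mul_sq (by norm_num : (0:ℝ) < 1/2)).integrableOn
  have h := MeasureTheory.intervalIntegral_tendsto_integral_Ioi 0 hint tendsto_natCast_atTop_atTop
  have heval : (∫ x in Set.Ioi (0:ℝ), Real.exp (-(1/2) * x ^ 2)) = Real.sqrt (π / 2) := by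
    rw [integral_gaussian_Ioi,
      show π / (1/2 : ℝ) = (π/2) * 2 ^ 2 by ring,
      Real.sqrt_mul (by positivity) (2^2), Real.sqrt_sq (by norm_num : (0:ℝ) ≤ 2)]
    ring
  rw [heval] at h
  exact h

lemma main_tendsto :
    Tendsto (fun N : ℕ => Sfun N / Real.sqrt N) atTop (nhds (Real.sqrt (π / 2))) := by
  rw [tendsto_order]
  constructor
  · intro a ha
    obtain ⟨A, hA⟩ := (cA_tendsto.eventually (eventually_gt_nhds ha)).exists
    set c : ℝ := ∫ u in (0:ℝ)..(A:ℝ), Real.exp (-(1/2) * u ^ 2) with hc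
    have hlow : Tendsto
        (fun N : ℕ => Real.exp (-(2 * ((A * ⌈Real.sqrt N⌉₊ : ℕ) : ℝ) ^ 3 / (N : ℝ) ^ 2))
          * (c - 1 / Real.sqrt N)) atTop (nhds (Real.exp (-0) * (c - 0))) := by
      apply Tendsto.mul
      · exact (Real.continuous_exp.tendsto _).comp ((delta_tendsto A).neg)
      · exact tendsto_const_nhds.sub inv_sqrt_tendsto
    rw [neg_zero, Real.exp_zero, one_mul, sub_zero] at hlow
    have hgt := hlow.eventually (eventually_gt_nhds hA)
    have hcond : ∀ᶠ N : ℕ in atTop, 2 * (A * ⌈Real.sqrt N⌉₊) ≤ N := by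
      filter_upwards [sqrt_tendsto.eventually_ge_atTop (4 * A + 4),
        eventually_ge_atTop 1] with N hs h1
      have ht1 : (1:ℝ) ≤ Real.sqrt N := Real.one_le_sqrt.mpr (by exact_mod_cast h1)
      have hceil : ((⌈Real.sqrt N⌉₊ : ℕ) : ℝ) ≤ 2 * Real.sqrt N := by
        have := Nat.ceil_lt_add_one (by linarith : (0:ℝ) ≤ Real.sqrt N)
        linarith
      have hsq : Real.sqrt N * Real.sqrt N = (N:ℝ) :=
        Real.mul_self_sqrt (Nat.cast_nonneg N)
      have key : ((2 * (A * ⌈Real.sqrt N⌉₊) : ℕ) : ℝ) ≤ (N : ℝ) := by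
        push_cast
        have h4A : 4 * (A:ℝ) ≤ Real.sqrt N := by
          have : (4 * A + 4 : ℝ) ≤ Real.sqrt N := by exact_mod_cast hs
          push_cast at this ⊢
          linarith
        nlinarith [Nat.cast_nonneg (α := ℝ) A]
      exact_mod_cast key
    filter_upwards [hgt, hcond, eventually_ge_atTop 1] with N hN hcondN h1
    have hsN : 0 < Real.sqrt N := Real.sqrt_pos.mpr (by positivity)
    have hlb := lower_bound A N h1 hcondN
    rw [← hc] at hlb
    have heq : Real.exp (-(2 * ((A * ⌈Real.sqrt N⌉₊ : ℕ) : ℝ) ^ 3 / (N : ℝ) ^ 2))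
          * (c - 1 / Real.sqrt N)
        = Real.exp (-(2 * ((A * ⌈Real.sqrt N⌉₊ : ℕ) : ℝ) ^ 3 / (N : ℝ) ^ 2))
          * (Real.sqrt N * c - 1) / Real.sqrt N := by
      field_simp
    calc a < _ := hN
      _ = _ := heq
      _ ≤ Sfun N / Real.sqrt N := (div_le_div_iff_of_pos_right hsN).mpr hlb
  · intro a ha
    have hupper : Tendsto (fun N : ℕ => 1 / Real.sqrt N + Real.sqrt (π/2))
        atTop (nhds (0 + Real.sqrt (π/2))) := inv_sqrt_tendsto.add tendsto_const_nhds
    rw [zero_add] at hupper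
    filter_upwards [hupper.eventually (eventually_lt_nhds ha), eventually_ge_atTop 1]
      with N hN h1
    have hsN : 0 < Real.sqrt N := Real.sqrt_pos.mpr (by positivity)
    have hub := upper_bound N h1
    have : Sfun N / Real.sqrt N ≤ 1 / Real.sqrt N + Real.sqrt (π/2) := by
      rw [div_le_iff₀ hsN]
      have hsq : Real.sqrt N * Real.sqrt N = (N:ℝ) :=
        Real.mul_self_sqrt (Nat.cast_nonneg N)
      rw [add_mul, one_div, inv_mul_cancel₀ hsN.ne']
      linarith
    linarith

theorem stmt_19 :
    Filter.Tendsto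
      (fun N : ℕ =>
        ((Nat.factorial (N - 1) : ℝ) / (N : ℝ) ^ N *
            ∑ n ∈ Finset.range N, (N : ℝ) ^ n / (Nat.factorial n)) /
          Real.sqrt (Real.pi / (2 * N)))
      Filter.atTop (nhds 1) := by
  have hπ : (0:ℝ) < Real.sqrt (π/2) := Real.sqrt_pos.mpr (by positivity)
  have h := main_tendsto.div_const (Real.sqrt (π/2))
  rw [div_self hπ.ne'] at h
  apply h.congr'
  filter_upwards [eventually_ge_atTop 1] with N h1
  have hN0 : (0:ℝ) < N := by positivity
  have hsN : 0 < Real.sqrt N := Real.sqrt_pos.mpr hN0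
  have hsq : Real.sqrt N * Real.sqrt N = (N:ℝ) := Real.mul_self_sqrt hN0.le
  rw [key_id N h1]
  rw [show π / (2 * (N:ℝ)) = (π/2) / (N:ℝ) from (div_div π 2 N).symm ▸ rfl,
    Real.sqrt_div (by positivity : (0:ℝ) ≤ π/2)]
  field_simp
  linear_combination (-(Sfun N)) * hsq
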